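/- Let b ≥ 2 be an integer, j ∈ ℕ_0, m ∈ {0,...,b^j−1}, l ∈ {1,...,b−1}, and α ∈ ℕ_0 with base-b digit sequence (α_0, α_1, ...). If the number of base-b digits ρ(α) equals j+1 and the leading digit α_j equals l, then |⟨h_{jml}, wal_α⟩| = b^{−j}; if ρ(α) ≠ j+1 or α_j ≠ l (with j ≥ 0), then ⟨h_{jml}, wal_α⟩ = 0. -/

import Mathlib

open MeasureTheory

/-- Number of base-`b` digits of `α` (the NRT weight): `ρ(0) = 0`. -/
def nrtWeight (b α : ℕ) : ℕ := if α = 0 then 0 else Nat.log b α + 1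

/-- The `α`-th `b`-adic Walsh function on `[0,1)`. -/
noncomputable def walsh (b α : ℕ) (x : ℝ) : ℂ :=
  Complex.exp (2 * Real.pi * Complex.I / b *
    ∑ k ∈ Finset.range (nrtWeight b α),
      ((α / b ^ k % b : ℕ) : ℂ) * ((⌊(b : ℝ) ^ (k + 1) * x⌋ % b : ℤ) : ℂ))

/-- The `b`-adic Haar function on `[0,1)` of level `j`, position `m`, frequency `l`. -/
noncomputable def badicHaar (b j m l : ℕ) (x : ℝ) : ℂ :=
  if x ∈ Set.Ico ((m : ℝ) / (b : ℝ) ^ j) (((m : ℝ) + 1) / (b : ℝ) ^ j) then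
    Complex.exp (2 * Real.pi * Complex.I * (l : ℂ) *
      (((⌊(b : ℝ) ^ (j + 1) * x⌋ - (b : ℤ) * m : ℤ) : ℂ)) / (b : ℂ))
  else 0

lemma sum_exp_eq_zero {b : ℕ} (hb : 2 ≤ b) {c : ℤ} (hc : ¬ (b : ℤ) ∣ c) :
    ∑ r ∈ Finset.range b, Complex.exp (2 * Real.pi * Complex.I * c * r / b) = 0 := by
  have hb0 : (b : ℂ) ≠ 0 := Nat.cast_ne_zero.2 (by omega)
  set z : ℂ := Complex.exp (2 * Real.pi * Complex.I * c / b) with hz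
  have hzr : ∀ r : ℕ, Complex.exp (2 * Real.pi * Complex.I * c * r / b) = z ^ r := by
    intro r
    rw [hz, ← Complex.exp_nat_mul]
    congr 1
    ring
  have hzb : z ^ b = 1 := by
    rw [hz, ← Complex.exp_nat_mul, Complex.exp_eq_one_iff]
    refine ⟨c, ?_⟩
    field_simp
  have hz1 : z ≠ 1 := by
    intro h
    rw [hz, Complex.exp_eq_one_iff] at h
    obtain ⟨n, hn⟩ := h
    apply hc
    refine ⟨n, ?_⟩
    have hpi : (2 * (Real.pi : ℂ) * Complex.I) ≠ 0 := by
      simp [Real.pi_ne_zero, Complex.I_ne_zero, Complex.ofReal_ne_zero]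
    have h2 : (c : ℂ) = b * n := by
      field_simp at hn
      exact mul_left_cancel₀ hpi (by rw [hn])
    exact_mod_cast h2
  have : ∑ r ∈ Finset.range b, Complex.exp (2 * Real.pi * Complex.I * c * r / b)
      = ∑ r ∈ Finset.range b, z ^ r := Finset.sum_congr rfl fun r _ => hzr r
  rw [this, geom_sum_eq hz1, hzb, sub_self, zero_div]

lemma sum_range_base_mul (B M : ℕ) (F : ℕ → ℂ) :
    ∑ t ∈ Finset.range (B * M), F t
      = ∑ q ∈ Finset.range M, ∑ r ∈ Finset.range B, F (B * q + r) := by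
  induction M with
  | zero => simp
  | succ M ih =>
      rw [Nat.mul_succ, Finset.sum_range_add, ih, Finset.sum_range_succ]

lemma floor_pow_mul_div {b : ℕ} (hb : 0 < b) {K L : ℕ} (h : K ≤ L) {x : ℝ} (hx : 0 ≤ x) :
    ⌊(b : ℝ) ^ L * x⌋₊ / b ^ (L - K) = ⌊(b : ℝ) ^ K * x⌋₊ := by
  have hbR : (0 : ℝ) < b := by exact_mod_cast hb
  have h1 : (b : ℝ) ^ L * x / ((b ^ (L - K) : ℕ) : ℝ) = (b : ℝ) ^ K * x := by
    push_cast
    rw [show L = K + (L - K) by omega, pow_add, Nat.add_sub_cancel_left]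
    field_simp
  rw [← Nat.floor_div_natCast, h1]

lemma integral_floor_piecewise (M : ℕ) (hM : 0 < M) (F : ℕ → ℂ) :
    ∫ x in Set.Ico (0 : ℝ) 1, F ⌊(M : ℝ) * x⌋₊
      = ((M : ℝ))⁻¹ • ∑ t ∈ Finset.range M, F t := by
  have hM' : (0 : ℝ) < M := by exact_mod_cast hM
  have hval : ∀ t : ℕ, ∀ x ∈ Set.Ico ((t : ℝ) / M) (((t : ℝ) + 1) / M),
      F ⌊(M : ℝ) * x⌋₊ = F t := by
    intro t x hx
    obtain ⟨h1, h2⟩ := hx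
    have hx0 : 0 ≤ x := le_trans (by positivity) h1
    rw [div_le_iff₀ hM'] at h1
    rw [lt_div_iff₀ hM'] at h2
    congr 1
    rw [Nat.floor_eq_iff (by positivity)]
    constructor
    · nlinarith
    · push_cast
      nlinarith
  have hcover : Set.Ico (0 : ℝ) 1
      = ⋃ t ∈ Finset.range M, Set.Ico ((t : ℝ) / M) (((t : ℝ) + 1) / M) := by
    ext x
    simp only [Set.mem_iUnion, Finset.mem_range, Set.mem_Ico]
    constructor
    · rintro ⟨h0, h1⟩
      refine ⟨⌊(M : ℝ) * x⌋₊, ?_, ?_, ?_⟩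
      · rw [Nat.floor_lt (by positivity)]
        nlinarith
      · rw [div_le_iff₀ hM']
        have := Nat.floor_le (a := (M : ℝ) * x) (by positivity)
        nlinarith
      · rw [lt_div_iff₀ hM']
        have := Nat.lt_floor_add_one ((M : ℝ) * x)
        push_cast
        nlinarith
    · rintro ⟨t, ht, h1, h2⟩
      have ht' : (t : ℝ) + 1 ≤ M := by exact_mod_cast Nat.succ_le_of_lt ht
      constructor
      · exact le_trans (by positivity) h1
      · calc x < ((t : ℝ) + 1) / M := h2
          _ ≤ 1 := by rw [div_le_one hM']; exact ht'
  rw [hcover, MeasureTheory.integral_biUnion_finset]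
  · have hpiece : ∀ t ∈ Finset.range M,
        ∫ x in Set.Ico ((t : ℝ) / M) (((t : ℝ) + 1) / M), F ⌊(M : ℝ) * x⌋₊
          = ((M : ℝ))⁻¹ • F t := by
      intro t ht
      rw [setIntegral_congr_fun measurableSet_Ico (hval t), setIntegral_const, Real.volume_real_Ico_of_le (by gcongr; linarith)]
      have h3 : ((t : ℝ) + 1) / M - (t : ℝ) / M = (M : ℝ)⁻¹ := by field_simp; ring
      rw [h3]
    rw [Finset.sum_congr rfl hpiece, ← Finset.smul_sum]
  · exact fun i _ => measurableSet_Ico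
  · intro i hi k hk hik
    simp only [Function.onFun]
    rw [Set.Ico_disjoint_Ico]
    simp only [Finset.coe_range, Set.mem_Iio] at hi hk
    rcases lt_or_gt_of_ne hik with h | h
    · refine le_trans (min_le_left _ _) (le_trans ?_ (le_max_right _ _))
      have : (i : ℝ) + 1 ≤ k := by exact_mod_cast h
      gcongr
    · refine le_trans (min_le_right _ _) (le_trans ?_ (le_max_left _ _))
      have : (k : ℝ) + 1 ≤ i := by exact_mod_cast h
      gcongr
  · intro i _
    exact (MeasureTheory.integrableOn_const_iff (C := F i)).2
      (Or.inr measure_Ico_lt_top) |>.congr_fun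
      (fun x hx => (hval i x hx).symm) measurableSet_Ico

theorem haar_walsh_inner_product (b j m l : ℕ) (hb : 2 ≤ b) (hm : m < b ^ j)
    (hl : 1 ≤ l ∧ l < b) (α : ℕ) :
    (nrtWeight b α = j + 1 ∧ α / b ^ j % b = l →
      ‖∫ x in Set.Ico (0 : ℝ) 1,
          badicHaar b j m l x * (starRingEnd ℂ) (walsh b α x)‖ = (b : ℝ) ^ (-(j : ℤ)))
    ∧ ((nrtWeight b α ≠ j + 1 ∨ α / b ^ j % b ≠ l) →
      ∫ x in Set.Ico (0 : ℝ) 1,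
          badicHaar b j m l x * (starRingEnd ℂ) (walsh b α x) = 0) := by
  obtain ⟨hl1, hl2⟩ := hl
  have hb0 : 0 < b := by omega
  have hbR : (0 : ℝ) < b := by exact_mod_cast hb0
  have hbC : (b : ℂ) ≠ 0 := Nat.cast_ne_zero.2 (by omega)
  set ρ : ℕ := nrtWeight b α with hρdef
  set N : ℕ := max (j + 1) ρ with hNdef
  have hjN : j + 1 ≤ N := le_max_left _ _
  have hρN : ρ ≤ N := le_max_right _ _
  have hαpow : α < b ^ ρ := by
    rw [hρdef, nrtWeight]
    split
    · simpa [*]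
    · exact Nat.lt_pow_succ_log_self (by omega) α
  set F : ℕ → ℂ := fun t =>
    (if t / b ^ (N - j) = m then
        Complex.exp (2 * Real.pi * Complex.I * l *
          (((t / b ^ (N - (j + 1)) : ℕ) : ℂ) - (b : ℂ) * m) / b)
      else 0)
    * Complex.exp (-(2 * Real.pi * Complex.I / b *
        ∑ k ∈ Finset.range ρ,
          ((α / b ^ k % b : ℕ) : ℂ) * ((t / b ^ (N - (k + 1)) % b : ℕ) : ℂ))) with hF
  have hglue : ∀ x ∈ Set.Ico (0 : ℝ) 1,
      badicHaar b j m l x * (starRingEnd ℂ) (walsh b α x)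
        = F ⌊((b ^ N : ℕ) : ℝ) * x⌋₊ := by
    intro x hx
    obtain ⟨hx0, hx1⟩ := hx
    have htc : ∀ K, K ≤ N → ⌊((b ^ N : ℕ) : ℝ) * x⌋₊ / b ^ (N - K) = ⌊(b : ℝ) ^ K * x⌋₊ := by
      intro K hK
      rw [show ((b ^ N : ℕ) : ℝ) = (b : ℝ) ^ N by push_cast; ring]
      exact floor_pow_mul_div hb0 hK hx0
    have hfl : ∀ K : ℕ, ⌊(b : ℝ) ^ K * x⌋ = (⌊(b : ℝ) ^ K * x⌋₊ : ℤ) :=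
      fun K => (Int.natCast_floor_eq_floor (by positivity)).symm
    rw [badicHaar, walsh, hF]
    have hcond : (x ∈ Set.Ico ((m : ℝ) / (b : ℝ) ^ j) (((m : ℝ) + 1) / (b : ℝ) ^ j))
        ↔ (⌊((b ^ N : ℕ) : ℝ) * x⌋₊ / b ^ (N - j) = m) := by
      rw [htc j (by omega), Set.mem_Ico, div_le_iff₀ (by positivity),
        lt_div_iff₀ (by positivity), Nat.floor_eq_iff (by positivity)]
      constructor
      · rintro ⟨h1, h2⟩
        exact ⟨by nlinarith, by push_cast; nlinarith⟩
      · rintro ⟨h1, h2⟩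
        push_cast at h2
        exact ⟨by nlinarith, by nlinarith⟩
    have hhaar : ⌊(b : ℝ) ^ (j + 1) * x⌋
        = ((⌊((b ^ N : ℕ) : ℝ) * x⌋₊ / b ^ (N - (j + 1)) : ℕ) : ℤ) := by
      rw [hfl (j + 1), htc (j + 1) hjN]
    have hwsum : ∑ k ∈ Finset.range ρ,
          ((α / b ^ k % b : ℕ) : ℂ) * ((⌊(b : ℝ) ^ (k + 1) * x⌋ % b : ℤ) : ℂ)
        = ∑ k ∈ Finset.range ρ,
          ((α / b ^ k % b : ℕ) : ℂ)
            * ((⌊((b ^ N : ℕ) : ℝ) * x⌋₊ / b ^ (N - (k + 1)) % b : ℕ) : ℂ) := by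
      refine Finset.sum_congr rfl fun k hk => ?_
      have hk1 : k + 1 ≤ N := by
        have := Finset.mem_range.1 hk
        omega
      congr 1
      rw [hfl (k + 1), ← htc (k + 1) hk1]
      norm_cast
    rw [hwsum]
    congr 1
    · -- Haar factor
      by_cases hc : ⌊((b ^ N : ℕ) : ℝ) * x⌋₊ / b ^ (N - j) = m
      · rw [if_pos (hcond.2 hc), if_pos hc]
        rw [hhaar]
        norm_cast
      · rw [if_neg (fun h => hc (hcond.1 h)), if_neg hc]
    · -- conjugate Walsh factor
      rw [← Complex.exp_conj]
      congr 1
      simp only [map_mul, map_div₀, map_sum, Complex.conj_I, Complex.conj_ofReal,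
        map_natCast, map_ofNat]
      ring
  have hint : ∫ x in Set.Ico (0 : ℝ) 1, badicHaar b j m l x * (starRingEnd ℂ) (walsh b α x)
      = ((b ^ N : ℕ) : ℝ)⁻¹ • ∑ t ∈ Finset.range (b ^ N), F t := by
    rw [setIntegral_congr_fun measurableSet_Ico hglue,
      integral_floor_piecewise _ (pow_pos hb0 N) F]
  by_cases hρle : ρ ≤ j + 1
  · -- N = j + 1
    have hN : N = j + 1 := by rw [hNdef]; exact max_eq_left hρle
    set d : ℕ := α / b ^ j % b with hd
    have hdb : d < b := Nat.mod_lt _ hb0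
    set Cn : ℕ := ∑ k ∈ Finset.range j, (α / b ^ k % b) * (m / b ^ (j - (k + 1)) % b) with hC
    have hsum : ∑ t ∈ Finset.range (b ^ N), F t
        = Complex.exp (-(2 * Real.pi * Complex.I / b * Cn))
          * ∑ r ∈ Finset.range b,
              Complex.exp (2 * Real.pi * Complex.I * (((l : ℤ) - (d : ℤ) : ℤ) : ℂ) * r / b) := by
      have hpow : b ^ N = b * b ^ j := by rw [hN, pow_succ]; ring
      rw [hpow, sum_range_base_mul,
        Finset.sum_eq_single_of_mem m (Finset.mem_range.2 hm) ?_]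
      · rw [Finset.mul_sum]
        refine Finset.sum_congr rfl fun r hr => ?_
        have hrb : r < b := Finset.mem_range.1 hr
        have hdiv1 : (b * m + r) / b ^ (N - j) = m := by
          rw [show N - j = 1 by omega, pow_one, Nat.mul_add_div hb0, Nat.div_eq_of_lt hrb,
            add_zero]
        have hdiv0 : (b * m + r) / b ^ (N - (j + 1)) = b * m + r := by
          rw [show N - (j + 1) = 0 by omega, pow_zero, Nat.div_one]
        have hmod : (b * m + r) % b = r := by
          rw [Nat.mul_add_mod, Nat.mod_eq_of_lt hrb]
        have hext : ∑ k ∈ Finset.range ρ,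
              ((α / b ^ k % b : ℕ) : ℂ) * (((b * m + r) / b ^ (N - (k + 1)) % b : ℕ) : ℂ)
            = ∑ k ∈ Finset.range (j + 1),
              ((α / b ^ k % b : ℕ) : ℂ) * (((b * m + r) / b ^ (N - (k + 1)) % b : ℕ) : ℂ) := by
          refine Finset.sum_subset (Finset.range_subset_range.2 hρle) fun k _ hk => ?_
          have hρk : ρ ≤ k := by
            by_contra hcon
            exact hk (Finset.mem_range.2 (by omega))
          have : α / b ^ k = 0 :=
            Nat.div_eq_of_lt (lt_of_lt_of_le hαpow (Nat.pow_le_pow_right (by omega) hρk))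
          simp [this]
        have hCc : ∑ k ∈ Finset.range j,
              ((α / b ^ k % b : ℕ) : ℂ) * (((b * m + r) / b ^ (N - (k + 1)) % b : ℕ) : ℂ)
            = (Cn : ℂ) := by
          rw [hC]
          push_cast
          refine Finset.sum_congr rfl fun k hk => ?_
          have hkj : k < j := Finset.mem_range.1 hk
          have hbs : b ^ (N - (k + 1)) = b * b ^ (j - (k + 1)) := by
            rw [← pow_succ']
            congr 1
            omega
          rw [hbs, ← Nat.div_div_eq_div_mul, Nat.mul_add_div hb0, Nat.div_eq_of_lt hrb,
            add_zero]
        rw [hF]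
        simp only
        rw [if_pos hdiv1, hdiv0, hext, Finset.sum_range_succ, hCc, hdiv0, hmod,
          ← Complex.exp_add, ← Complex.exp_add]
        congr 1
        push_cast
        ring
      · intro q hq hqm
        refine Finset.sum_eq_zero fun r hr => ?_
        have hrb : r < b := Finset.mem_range.1 hr
        have hdiv1 : (b * q + r) / b ^ (N - j) = q := by
          rw [show N - j = 1 by omega, pow_one, Nat.mul_add_div hb0, Nat.div_eq_of_lt hrb,
            add_zero]
        rw [hF]
        simp only
        rw [if_neg (by rw [hdiv1]; exact hqm), zero_mul]
    constructor
    · rintro ⟨h1, h2⟩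
      rw [hint, hsum]
      have hc0 : ((l : ℤ) - (d : ℤ) : ℤ) = 0 := by omega
      have hsum1 : ∑ r ∈ Finset.range b,
          Complex.exp (2 * Real.pi * Complex.I * (((l : ℤ) - (d : ℤ) : ℤ) : ℂ) * r / b)
            = (b : ℂ) := by
        rw [hc0]
        simp
      rw [hsum1]
      rw [norm_smul, norm_mul]
      have habs1 : ‖Complex.exp (-(2 * Real.pi * Complex.I / b * Cn))‖ = 1 := by
        rw [show (-(2 * (Real.pi : ℂ) * Complex.I / b * Cn))
            = ((-(2 * Real.pi * Cn / b) : ℝ) : ℂ) * Complex.I by push_cast; ring,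
          Complex.norm_exp_ofReal_mul_I]
      rw [habs1, Complex.norm_natCast, one_mul, Real.norm_eq_abs, hN]
      rw [abs_of_nonneg (by positivity)]
      push_cast
      rw [zpow_neg, zpow_natCast, pow_succ]
      field_simp
    · intro h
      have hdl : d ≠ l := by
        rcases h with h | h
        · have hρj : ρ ≤ j := by omega
          have hz : α / b ^ j = 0 :=
            Nat.div_eq_of_lt (lt_of_lt_of_le hαpow (Nat.pow_le_pow_right (by omega) hρj))
          rw [hd, hz]
          simp only [Nat.zero_mod]
          omega
        · exact h
      rw [hint, hsum, sum_exp_eq_zero hb ?_, mul_zero, smul_zero]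
      intro hdvd
      have h1 : ((l : ℤ) - (d : ℤ) : ℤ) ≠ 0 := by omega
      have h2 : (b : ℤ) ≤ |(l : ℤ) - (d : ℤ)| := Int.le_of_dvd (abs_pos.2 h1) ((dvd_abs _ _).2 hdvd)
      have h3 : |(l : ℤ) - (d : ℤ)| < b := by
        rw [abs_lt]
        omega
      omega
  · -- ρ ≥ j + 2 : integral vanishes
    have hρ2 : j + 2 ≤ ρ := by omega
    have hN : N = ρ := by rw [hNdef]; exact max_eq_right (by omega)
    have hα0 : α ≠ 0 := by
      intro h
      have : ρ = 0 := by rw [hρdef, nrtWeight, if_pos h]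
      omega
    have hlogρ : Nat.log b α = ρ - 1 := by
      rw [hρdef, nrtWeight, if_neg hα0]
      omega
    have hlow : b ^ (ρ - 1) ≤ α := by
      have := Nat.pow_log_le_self b hα0
      rwa [hlogρ] at this
    have he1 : 1 ≤ α / b ^ (ρ - 1) :=
      (Nat.one_le_div_iff (pow_pos hb0 _)).2 hlow
    have he2 : α / b ^ (ρ - 1) < b := by
      rw [Nat.div_lt_iff_lt_mul (pow_pos hb0 _)]
      calc α < b ^ ρ := hαpow
        _ = b * b ^ (ρ - 1) := by rw [← pow_succ']; congr 1; omega
    have hemod : α / b ^ (ρ - 1) % b = α / b ^ (ρ - 1) := Nat.mod_eq_of_lt he2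
    have hce : ¬ (b : ℤ) ∣ (-((α / b ^ (ρ - 1) % b : ℕ) : ℤ) : ℤ) := by
      intro hdvd
      rw [dvd_neg] at hdvd
      have hpos : (0 : ℤ) < ((α / b ^ (ρ - 1) % b : ℕ) : ℤ) := by
        rw [hemod]
        exact_mod_cast he1
      have := Int.le_of_dvd hpos hdvd
      rw [hemod] at this
      have : (b : ℤ) ≤ (α / b ^ (ρ - 1) : ℕ) := this
      exact absurd (by exact_mod_cast this) (Nat.not_le.2 he2)
    have hzero : ∑ t ∈ Finset.range (b ^ N), F t = 0 := by
      have hpow : b ^ N = b * b ^ (N - 1) := by rw [← pow_succ']; congr 1; omega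
      rw [hpow, sum_range_base_mul]
      refine Finset.sum_eq_zero fun u hu => ?_
      set Ku : ℂ := (if u / b ^ (N - j - 1) = m then
            Complex.exp (2 * Real.pi * Complex.I * l *
              (((u / b ^ (N - (j + 1) - 1) : ℕ) : ℂ) - (b : ℂ) * m) / b)
          else 0)
        * Complex.exp (-(2 * Real.pi * Complex.I / b *
            ∑ k ∈ Finset.range (ρ - 1),
              ((α / b ^ k % b : ℕ) : ℂ) * ((u / b ^ (N - (k + 1) - 1) % b : ℕ) : ℂ))) with hKu
      have key : ∀ v ∈ Finset.range b, F (b * u + v)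
          = Ku * Complex.exp (2 * Real.pi * Complex.I
              * ((-((α / b ^ (ρ - 1) % b : ℕ) : ℤ) : ℤ) : ℂ) * v / b) := by
        intro v hv
        have hvb : v < b := Finset.mem_range.1 hv
        have hdivgen : ∀ s : ℕ, 1 ≤ s → (b * u + v) / b ^ s = u / b ^ (s - 1) := by
          intro s hs
          rw [show b ^ s = b * b ^ (s - 1) by rw [← pow_succ']; congr 1; omega,
            ← Nat.div_div_eq_div_mul, Nat.mul_add_div hb0, Nat.div_eq_of_lt hvb, add_zero]
        rw [hF]
        simp only
        rw [hdivgen (N - j) (by omega), hdivgen (N - (j + 1)) (by omega)]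
        rw [show Finset.range ρ = Finset.range ((ρ - 1) + 1) from by congr 1; omega,
          Finset.sum_range_succ]
        rw [show N - (ρ - 1 + 1) = 0 by omega, pow_zero, Nat.div_one,
          show (b * u + v) % b = v from by rw [Nat.mul_add_mod, Nat.mod_eq_of_lt hvb]]
        have hsm : ∀ k ∈ Finset.range (ρ - 1),
            ((α / b ^ k % b : ℕ) : ℂ) * (((b * u + v) / b ^ (N - (k + 1)) % b : ℕ) : ℂ)
              = ((α / b ^ k % b : ℕ) : ℂ) * ((u / b ^ (N - (k + 1) - 1) % b : ℕ) : ℂ) := by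
          intro k hk
          have hkρ : k < ρ - 1 := Finset.mem_range.1 hk
          rw [hdivgen (N - (k + 1)) (by omega)]
        rw [Finset.sum_congr rfl hsm, hKu]
        set S : ℂ := ∑ k ∈ Finset.range (ρ - 1),
            ((α / b ^ k % b : ℕ) : ℂ) * ((u / b ^ (N - (k + 1) - 1) % b : ℕ) : ℂ) with hS
        rw [show (-(2 * (Real.pi : ℂ) * Complex.I / b
                * (S + ((α / b ^ (ρ - 1) % b : ℕ) : ℂ) * v)))
              = (-(2 * (Real.pi : ℂ) * Complex.I / b * S))
                + (2 * (Real.pi : ℂ) * Complex.I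
                    * ((-((α / b ^ (ρ - 1) % b : ℕ) : ℤ) : ℤ) : ℂ) * v / b) from by
            rw [Int.cast_neg, Int.cast_natCast]; ring,
          Complex.exp_add, ← mul_assoc]
      rw [Finset.sum_congr rfl key, ← Finset.mul_sum, sum_exp_eq_zero hb hce, mul_zero]
    constructor
    · rintro ⟨h1, _⟩
      exact absurd h1 (by omega)
    · intro _
      rw [hint, hzero, smul_zero]
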